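/- Let w₁, w₂, w₃ ∈ ℝ³ be linearly independent vectors, let K = {λ₁w₁ + λ₂w₂ + λ₃w₃ : λ₁, λ₂, λ₃ ≥ 0} be the simplicial cone they span, let v = α₁w₁ + α₂w₂ + α₃w₃ with α₁, α₂, α₃ > 0 be a point in the interior of K, and let d be a positive real number. Then the set of pairs (n, m), where n ∈ ℤ³ is primitive and m is an integer with 1 ≤ m < d, such that the set {u ∈ K : ⟨n, u⟩ ≤ m} is bounded and contains v, and the set {u ∈ K : ⟨n, u⟩ > m} is nonempty, is finite. -/
import Mathlib


theorem stmt9 (w₁ w₂ w₃ : Fin 3 → ℝ)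
    (hLI : LinearIndependent ℝ ![w₁, w₂, w₃])
    (α₁ α₂ α₃ : ℝ) (hα₁ : 0 < α₁) (hα₂ : 0 < α₂) (hα₃ : 0 < α₃)
    (v : Fin 3 → ℝ) (hv : v = α₁ • w₁ + α₂ • w₂ + α₃ • w₃)
    (d : ℝ) (hd : 0 < d) :
    let K : Set (Fin 3 → ℝ) :=
      {u | ∃ l₁ l₂ l₃ : ℝ, 0 ≤ l₁ ∧ 0 ≤ l₂ ∧ 0 ≤ l₃ ∧ u = l₁ • w₁ + l₂ • w₂ + l₃ • w₃}
    {nm : (Fin 3 → ℤ) × ℤ |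
      Int.gcd (Int.gcd (nm.1 0) (nm.1 1)) (nm.1 2) = 1 ∧
      1 ≤ nm.2 ∧ (nm.2 : ℝ) < d ∧
      Bornology.IsBounded {u ∈ K | ∑ i, (nm.1 i : ℝ) * u i ≤ (nm.2 : ℝ)} ∧
      v ∈ {u ∈ K | ∑ i, (nm.1 i : ℝ) * u i ≤ (nm.2 : ℝ)} ∧
      {u ∈ K | (nm.2 : ℝ) < ∑ i, (nm.1 i : ℝ) * u i}.Nonempty}.Finite := by
  intro K
  set W : Fin 3 → (Fin 3 → ℝ) := ![w₁, w₂, w₃] with hWdef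
  set M : Matrix (Fin 3) (Fin 3) ℝ := Matrix.of W with hMdef
  have hU : IsUnit M := Matrix.linearIndependent_rows_iff_isUnit.mp hLI
  have hinj : Function.Injective M.mulVec := Matrix.mulVec_injective_iff_isUnit.mpr hU
  have hsurj : Function.Surjective M.mulVec := Matrix.mulVec_surjective_iff_isUnit.mpr hU
  let e : (Fin 3 → ℝ) ≃ₗ[ℝ] (Fin 3 → ℝ) := LinearEquiv.ofBijective M.mulVecLin ⟨hinj, hsurj⟩
  let f : (Fin 3 → ℝ) →L[ℝ] (Fin 3 → ℝ) :=
    LinearMap.toContinuousLinearMap (e.symm : (Fin 3 → ℝ) →ₗ[ℝ] (Fin 3 → ℝ))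
  set Cb : ℝ := max (d / α₁) (max (d / α₂) (d / α₃)) with hCbdef
  have hCb : 0 ≤ Cb := le_trans (le_of_lt (div_pos hd hα₁)) (le_max_left _ _)
  set R : ℝ := ‖f‖ * Cb with hRdef
  have hR : 0 ≤ R := mul_nonneg (norm_nonneg f) hCb
  apply Set.Finite.subset (Set.Finite.prod
    (Set.Finite.pi (fun _ : Fin 3 => Set.finite_Icc (-⌈R⌉) ⌈R⌉)) (Set.finite_Icc (1:ℤ) ⌈d⌉))
  rintro ⟨n, m⟩ ⟨-, hm1, hmd, hbdd, ⟨hvK, hvle⟩, -⟩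
  set nr : Fin 3 → ℝ := fun j => (n j : ℝ) with hnrdef
  set s : Fin 3 → ℝ := M.mulVec nr with hsdef
  have hsi : ∀ i, s i = ∑ j, (n j : ℝ) * W i j := by
    intro i
    simp only [hsdef, Matrix.mulVec, dotProduct, Matrix.of_apply]
    exact Finset.sum_congr rfl fun j _ => mul_comm _ _
  -- dot product of n with v
  have hDv : (∑ j, (n j : ℝ) * v j) = α₁ * s 0 + α₂ * s 1 + α₃ * s 2 := by
    have e1 : ∀ (a : ℝ) (w : Fin 3 → ℝ),
        a * ∑ j, (n j : ℝ) * w j = ∑ j, (n j : ℝ) * (a * w j) := by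
      intro a w
      rw [Finset.mul_sum]
      exact Finset.sum_congr rfl fun j _ => by ring
    rw [hv]
    simp only [hsi, hWdef, Matrix.cons_val_zero, Matrix.cons_val_one, Matrix.head_cons,
      Matrix.cons_val_two, Matrix.tail_cons]
    rw [e1, e1, e1]
    simp only [Pi.add_apply, Pi.smul_apply, smul_eq_mul, mul_add, Finset.sum_add_distrib]
  -- each s i is positive
  have hpos : ∀ i, 0 < s i := by
    intro i
    by_contra hle
    push_neg at hle
    obtain ⟨C, hC⟩ := isBounded_iff_forall_norm_le.mp hbdd
    have hWi : W i ≠ 0 := hLI.ne_zero i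
    have hWin : 0 < ‖W i‖ := norm_pos_iff.mpr hWi
    have hvC : ‖v‖ ≤ C := hC v ⟨hvK, hvle⟩
    set t : ℝ := (C + ‖v‖ + 1) / ‖W i‖ with htdef
    have ht : 0 ≤ t := by
      apply div_nonneg _ hWin.le
      have := norm_nonneg v
      linarith
    set u : Fin 3 → ℝ := v + t • W i with hudef
    have huK : u ∈ K := by
      fin_cases i
      · exact ⟨α₁ + t, α₂, α₃, by linarith, hα₂.le, hα₃.le, by
          simp only [hudef, hv, hWdef]; simp; module⟩
      · exact ⟨α₁, α₂ + t, α₃, hα₁.le, by linarith, hα₃.le, by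
          simp only [hudef, hv, hWdef]; simp; module⟩
      · exact ⟨α₁, α₂, α₃ + t, hα₁.le, hα₂.le, by linarith, by
          simp only [hudef, hv, hWdef]; simp; module⟩
    have hDu : (∑ j, (n j : ℝ) * u j) = (∑ j, (n j : ℝ) * v j) + t * s i := by
      simp only [hudef, Pi.add_apply, Pi.smul_apply, smul_eq_mul, mul_add,
        Finset.sum_add_distrib, hsi, Finset.mul_sum]
      congr 1
      apply Finset.sum_congr rfl
      intro j _
      ring
    have hts : t * s i ≤ 0 := mul_nonpos_of_nonneg_of_nonpos ht hle
    have huset : u ∈ {u ∈ K | ∑ j, (n j : ℝ) * u j ≤ (m : ℝ)} := by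
      refine ⟨huK, ?_⟩
      rw [hDu]
      linarith
    have huC : ‖u‖ ≤ C := hC u huset
    have h1 : ‖t • W i‖ = t * ‖W i‖ := by
      rw [norm_smul, Real.norm_eq_abs, abs_of_nonneg ht]
    have h2 : t * ‖W i‖ = C + ‖v‖ + 1 := by
      rw [htdef, div_mul_cancel₀ _ hWin.ne']
    have h3 : ‖t • W i‖ ≤ ‖u‖ + ‖v‖ := by
      have : t • W i = u - v := by rw [hudef]; abel
      rw [this]
      exact norm_sub_le _ _
    linarith
  -- each s i is at most Cb
  have hsle : ∀ i, s i ≤ Cb := by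
    have key : α₁ * s 0 + α₂ * s 1 + α₃ * s 2 ≤ (m : ℝ) := hDv ▸ hvle
    have h0 := hpos 0; have h1 := hpos 1; have h2 := hpos 2
    intro i
    fin_cases i
    · have : s 0 ≤ d / α₁ := by rw [le_div_iff₀ hα₁]; nlinarith
      exact le_trans this (le_max_left _ _)
    · have : s 1 ≤ d / α₂ := by rw [le_div_iff₀ hα₂]; nlinarith
      exact le_trans this (le_trans (le_max_left _ _) (le_max_right _ _))
    · have : s 2 ≤ d / α₃ := by rw [le_div_iff₀ hα₃]; nlinarith
      exact le_trans this (le_trans (le_max_right _ _) (le_max_right _ _))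
  have hsnorm : ‖s‖ ≤ Cb := by
    rw [pi_norm_le_iff_of_nonneg hCb]
    intro i
    rw [Real.norm_eq_abs, abs_le]
    exact ⟨by linarith [hpos i], hsle i⟩
  have hnr : ‖nr‖ ≤ R := by
    have heq : nr = f s := by
      have : s = e nr := rfl
      rw [this]
      simp only [f, LinearMap.coe_toContinuousLinearMap', LinearEquiv.coe_coe,
        LinearEquiv.symm_apply_apply]
    calc ‖nr‖ = ‖f s‖ := by rw [← heq]
      _ ≤ ‖f‖ * ‖s‖ := f.le_opNorm s
      _ ≤ ‖f‖ * Cb := by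
          exact mul_le_mul_of_nonneg_left hsnorm (norm_nonneg f)
  constructor
  · intro i _
    have h1 : |(n i : ℝ)| ≤ R := by
      calc |(n i : ℝ)| = ‖nr i‖ := by rw [Real.norm_eq_abs]
        _ ≤ ‖nr‖ := norm_le_pi_norm nr i
        _ ≤ R := hnr
    have h2 : |n i| ≤ ⌈R⌉ := by
      have : (|n i| : ℝ) ≤ (⌈R⌉ : ℝ) := by
        exact_mod_cast le_trans h1 (Int.le_ceil R)
      exact_mod_cast this
    rw [abs_le] at h2
    exact ⟨h2.1, h2.2⟩
  · refine ⟨hm1, ?_⟩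
    have : (m : ℝ) ≤ (⌈d⌉ : ℝ) := le_trans hmd.le (Int.le_ceil d)
    exact_mod_cast this
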